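/- Let n ≥ 1 be a real number, s ≥ 0, and let H, g : [0, s] → ℝ be differentiable with H(0) > 0, H'(τ) ≤ −H(τ)²/n for all τ ∈ [0, s], g > 0, and g'(τ) = H(τ)·g(τ) for all τ ∈ [0, s]. Then g(s) ≤ ((H(0)·s + n)/n)^n · g(0). -/

import Mathlib

open Set

/-- **Area growth of equidistant hypersurfaces** (from the proof of Lemma 6.2): if `H` is
differentiable on `[0, s]` with `H(0) > 0` and `H' ≤ −H²/n`, and the positive function `g`
satisfies `g' = H·g` on `[0, s]`, then `g(s) ≤ ((H(0)s + n)/n)^n · g(0)`. -/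
theorem equidistant_area_growth (n : ℝ) (hn : 1 ≤ n) (s : ℝ) (hs : 0 ≤ s)
    (H H' g g' : ℝ → ℝ)
    (hHderiv : ∀ τ ∈ Icc (0 : ℝ) s, HasDerivWithinAt H (H' τ) (Icc (0 : ℝ) s) τ)
    (h0 : 0 < H 0)
    (hHineq : ∀ τ ∈ Icc (0 : ℝ) s, H' τ ≤ -(H τ) ^ 2 / n)
    (hgderiv : ∀ τ ∈ Icc (0 : ℝ) s, HasDerivWithinAt g (g' τ) (Icc (0 : ℝ) s) τ)
    (hgpos : ∀ τ ∈ Icc (0 : ℝ) s, 0 < g τ)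
    (hgode : ∀ τ ∈ Icc (0 : ℝ) s, g' τ = H τ * g τ) :
    g s ≤ ((H 0 * s + n) / n) ^ n * g 0 := by
  have hn0 : (0 : ℝ) < n := lt_of_lt_of_le one_pos hn
  have hden : ∀ τ : ℝ, 0 ≤ τ → 0 < H 0 * τ + n :=
    fun τ hτ => add_pos_of_nonneg_of_pos (mul_nonneg h0.le hτ) hn0
  set B : ℝ → ℝ := fun τ => n * H 0 / (H 0 * τ + n) with hB
  have hBpos : ∀ τ : ℝ, 0 ≤ τ → 0 < B τ :=
    fun τ hτ => div_pos (mul_pos hn0 h0) (hden τ hτ)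
  -- derivative of B
  have hBderiv : ∀ x : ℝ, 0 ≤ x → HasDerivAt B (-(B x) ^ 2 / n) x := by
    intro x hx
    have hd := (hden x hx).ne'
    have h1 : HasDerivAt (fun τ : ℝ => H 0 * τ + n) (H 0) x := by
      simpa using ((hasDerivAt_id x).const_mul (H 0)).add_const n
    have := (hasDerivAt_const x (n * H 0)).div h1 hd
    convert this using 1
    · rfl
    · rfl
    · rfl
    rw [hB]; dsimp only
    field_simp
    ring
  -- nhds fact for converting Icc-derivatives to Ici-derivatives
  have hmem : ∀ x ∈ Ico (0 : ℝ) s, Icc (0 : ℝ) s ∈ nhdsWithin x (Ici x) :=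
    fun x hx => Icc_mem_nhdsGE_of_mem hx
  have hHcont : ContinuousOn H (Icc 0 s) := fun x hx => (hHderiv x hx).continuousWithinAt
  -- Step 1: Riccati comparison H ≤ B on [0, s]
  have hHB : ∀ τ ∈ Icc (0 : ℝ) s, H τ ≤ B τ := by
    intro τ hτ
    refine le_of_forall_pos_le_add ?_
    intro ε hε
    refine image_le_of_deriv_right_lt_deriv_boundary' (f := H) (f' := H')
      (B := fun t => B t + ε) (B' := fun t => -(B t) ^ 2 / n) hHcont
      (fun x hx => (hHderiv x ⟨hx.1, hx.2.le⟩).mono_of_mem_nhdsWithin (hmem x hx)) ?_ ?_ ?_ ?_ hτ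
    · show H 0 ≤ B 0 + ε
      have : B 0 = H 0 := by simp only [hB, mul_zero, zero_add]; field_simp
      rw [this]; linarith
    · intro x hx
      exact ((hBderiv x hx.1).continuousAt.continuousWithinAt).add continuousWithinAt_const
    · intro x hx
      exact ((hBderiv x hx.1).add_const ε).hasDerivWithinAt
    · intro x hx hEq
      have hBx := hBpos x hx.1
      have hHx : B x < H x := by rw [hEq]; linarith
      have h2 : (B x) ^ 2 < (H x) ^ 2 := by nlinarith
      calc H' x ≤ -(H x) ^ 2 / n := hHineq x ⟨hx.1, hx.2.le⟩
        _ < -(B x) ^ 2 / n := by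
          rw [div_lt_div_iff_of_pos_right hn0]; nlinarith
  -- the comparison function F
  set F : ℝ → ℝ := fun τ => ((H 0 * τ + n) / n) ^ n with hF
  have hFpos : ∀ τ : ℝ, 0 ≤ τ → 0 < F τ :=
    fun τ hτ => Real.rpow_pos_of_pos (div_pos (hden τ hτ) hn0) n
  have hFderiv : ∀ x : ℝ, 0 ≤ x → HasDerivAt F (B x * F x) x := by
    intro x hx
    have hu : (0 : ℝ) < (H 0 * x + n) / n := div_pos (hden x hx) hn0
    have h1 : HasDerivAt (fun τ : ℝ => (H 0 * τ + n) / n) (H 0 / n) x := by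
      simpa using (((hasDerivAt_id x).const_mul (H 0)).add_const n).div_const n
    have h2 := h1.rpow_const (p := n) (Or.inl hu.ne')
    convert h2 using 1
    have : ((H 0 * x + n) / n) ^ n = ((H 0 * x + n) / n) ^ (n - 1) * ((H 0 * x + n) / n) := by
      rw [← Real.rpow_add_one hu.ne']; ring_nf
    rw [hB, hF]
    dsimp only
    rw [this]
    field_simp
  -- Step 2: compare g with F via the ratio g/F
  set h : ℝ → ℝ := fun τ => g τ / F τ with hh
  have hF0 : F 0 = 1 := by
    simp [hF, div_self hn0.ne', Real.one_rpow]
  have hkey : ∀ x ∈ Icc (0 : ℝ) s, h x ≤ g 0 := by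
    refine image_le_of_deriv_right_le_deriv_boundary (f := h)
      (f' := fun x => (g' x * F x - g x * (B x * F x)) / (F x) ^ 2)
      (B := fun _ => g 0) (B' := fun _ => 0) ?_ ?_ ?_ continuousOn_const ?_ ?_
    · intro x hx
      exact ((hgderiv x hx).continuousWithinAt).div
        ((hFderiv x hx.1).continuousAt.continuousWithinAt) (hFpos x hx.1).ne'
    · intro x hx
      exact HasDerivWithinAt.div
        ((hgderiv x ⟨hx.1, hx.2.le⟩).mono_of_mem_nhdsWithin (hmem x hx))
        ((hFderiv x hx.1).hasDerivWithinAt) (hFpos x hx.1).ne'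
    · simp [hh, hF0]
    · intro x hx
      exact (hasDerivWithinAt_const x _ (g 0)).congr_deriv rfl
    · intro x hx
      have hx' : x ∈ Icc (0 : ℝ) s := ⟨hx.1, hx.2.le⟩
      have h1 : g' x * F x - g x * (B x * F x) ≤ 0 := by
        rw [hgode x hx']
        have : H x * g x * F x - g x * (B x * F x) = (H x - B x) * (g x * F x) := by ring
        nlinarith [hHB x hx', hgpos x hx', hFpos x hx.1, mul_pos (hgpos x hx') (hFpos x hx.1)]
      exact div_nonpos_of_nonpos_of_nonneg h1 (sq_nonneg _)
  have hhs := hkey s ⟨hs, le_refl s⟩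
  have hFs := hFpos s hs
  rw [hh] at hhs
  dsimp only at hhs
  rw [div_le_iff₀ hFs] at hhs
  calc g s ≤ g 0 * F s := hhs
    _ = ((H 0 * s + n) / n) ^ n * g 0 := by rw [hF]; ring
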